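/- For every positive integer n, the number of semistandard Young tableaux of shape (n, n, n−1, n−1, …, 2, 2, 1, 1) with entries from {1,…,2n+1} equals the number of semistandard Young tableaux of shape (n, n−1, n−1, …, 2, 2, 1, 1) with entries from {1,…,2n+1}. -/

import Mathlib

/-- The Young diagram of the partition `(n, n-1, n-1, ..., 2, 2, 1, 1)` (of length `2n-1`,
with first part `n` and with parts `2j` and `2j+1` both equal to `n-j` for `j = 1, …, n-1`):
row `i` (0-based) has length `n - (i+1)/2`. -/
def lambdaShape (n : ℕ) : YoungDiagram where
  cells := (Finset.range (2*n) ×ˢ Finset.range n).filter fun p => p.2 < n - (p.1 + 1) / 2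
  isLowerSet := by
    intro a b hba ha
    have h1 : b.1 ≤ a.1 := (Prod.le_def.mp hba).1
    have h2 : b.2 ≤ a.2 := (Prod.le_def.mp hba).2
    simp only [Finset.mem_coe, Finset.mem_filter, Finset.mem_product, Finset.mem_range] at ha ⊢
    have hd : (b.1 + 1) / 2 ≤ (a.1 + 1) / 2 := Nat.div_le_div_right (by omega)
    omega
/-- The set of semistandard Young tableaux of shape `μ` with entries from `{1, …, k}`. -/
def ssytSet (μ : YoungDiagram) (k : ℕ) : Set (SemistandardYoungTableau μ) :=
  {T | ∀ i j, (i, j) ∈ μ → 1 ≤ T i j ∧ T i j ≤ k}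

/-- The number of semistandard Young tableaux of shape `μ` with entries from `{1, …, k}`. -/
noncomputable def ssytCount (μ : YoungDiagram) (k : ℕ) : ℕ := (ssytSet μ k).ncard

/-- The Young diagram of the partition `(n, n, n-1, n-1, ..., 2, 2, 1, 1)` (of length `2n`,
with parts `2j-1` and `2j` both equal to `n+1-j` for `j = 1, …, n`):
row `i` (0-based) has length `n - i/2`. -/
def muShape (n : ℕ) : YoungDiagram where
  cells := (Finset.range (2*n) ×ˢ Finset.range n).filter fun p => p.2 < n - p.1 / 2
  isLowerSet := by
    intro a b hba ha
    have h1 : b.1 ≤ a.1 := (Prod.le_def.mp hba).1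
    have h2 : b.2 ≤ a.2 := (Prod.le_def.mp hba).2
    simp only [Finset.mem_coe, Finset.mem_filter, Finset.mem_product, Finset.mem_range] at ha ⊢
    have hd : b.1 / 2 ≤ a.1 / 2 := Nat.div_le_div_right h1
    omega

/-! ### Gelfand–Tsetlin-type patterns -/

/-- `g k i` records the number of entries `≤ k` in row `i` (0-based). -/
def IsGT (f : ℕ → ℕ) (N : ℕ) (g : ℕ → ℕ → ℕ) : Prop :=
  (∀ i, g 0 i = 0) ∧ (∀ k i, g k i ≤ g (k+1) i) ∧ (∀ k i, g (k+1) (i+1) ≤ g k i) ∧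
  (∀ k i, N ≤ k → g k i = f i)

def GTset (f : ℕ → ℕ) (N : ℕ) : Set (ℕ → ℕ → ℕ) := {g | IsGT f N g}

namespace IsGT

variable {f : ℕ → ℕ} {N : ℕ} {g : ℕ → ℕ → ℕ}

lemma mono (h : IsGT f N g) {k k' : ℕ} (hk : k ≤ k') (i : ℕ) : g k i ≤ g k' i := by
  induction k', hk using Nat.le_induction with
  | base => exact le_rfl
  | succ k' hk ih => exact ih.trans (h.2.1 k' i)

lemma shift (h : IsGT f N g) (d k i : ℕ) : g (k + d) (i + d) ≤ g k i := by
  induction d with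
  | zero => exact le_rfl
  | succ d ih =>
    have := h.2.2.1 (k + d) (i + d)
    calc g (k + (d+1)) (i + (d+1)) = g ((k+d)+1) ((i+d)+1) := by ring_nf
      _ ≤ g (k+d) (i+d) := h.2.2.1 _ _
      _ ≤ g k i := ih

lemma eq_zero (h : IsGT f N g) {k i : ℕ} (hik : k ≤ i) : g k i = 0 := by
  have h1 : g (0 + k) ((i - k) + k) ≤ g 0 (i - k) := h.shift k 0 (i - k)
  have h2 : g 0 (i - k) = 0 := h.1 _
  have h3 : (i - k) + k = i := by omega
  simpa [h3, h2] using h1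

lemma le_f (h : IsGT f N g) (k i : ℕ) : g k i ≤ f i := by
  have h1 : g k i ≤ g (max k N) i := h.mono (le_max_left _ _) i
  have h2 : g (max k N) i = f i := h.2.2.2 _ i (le_max_right _ _)
  omega

end IsGT

/-! ### The map from tableaux to patterns -/

def phi (μ : YoungDiagram) (T : SemistandardYoungTableau μ) : ℕ → ℕ → ℕ :=
  fun k i => ((Finset.range (μ.rowLen i)).filter (fun j => T i j ≤ k)).card

lemma phi_isGT {μ : YoungDiagram} {N : ℕ} {T : SemistandardYoungTableau μ}
    (hT : T ∈ ssytSet μ N) : IsGT μ.rowLen N (phi μ T) := by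
  refine ⟨?_, ?_, ?_, ?_⟩
  · intro i
    rw [phi, Finset.card_eq_zero, Finset.filter_eq_empty_iff]
    intro j hj
    rw [Finset.mem_range, ← YoungDiagram.mem_iff_lt_rowLen] at hj
    have := (hT i j hj).1
    omega
  · intro k i
    apply Finset.card_le_card
    intro j hj
    simp only [Finset.mem_filter, Finset.mem_range] at hj ⊢
    omega
  · intro k i
    apply Finset.card_le_card_of_injOn (fun j => j)
    · intro j hj
      simp only [Finset.mem_coe, Finset.mem_filter, Finset.mem_range] at hj ⊢
      obtain ⟨hjr, hjv⟩ := hj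
      have hmem : (i + 1, j) ∈ μ := YoungDiagram.mem_iff_lt_rowLen.mpr hjr
      have hlt : T i j < T (i+1) j := T.col_strict (Nat.lt_succ_self i) hmem
      refine ⟨lt_of_lt_of_le hjr (μ.rowLen_anti i (i+1) (by omega)), by omega⟩
    · exact Function.Injective.injOn (fun a b h => h)
  · intro k i hk
    rw [phi]
    have : (Finset.range (μ.rowLen i)).filter (fun j => T i j ≤ k) =
        Finset.range (μ.rowLen i) := by
      rw [Finset.filter_eq_self]
      intro j hj
      rw [Finset.mem_range, ← YoungDiagram.mem_iff_lt_rowLen] at hj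
      have := (hT i j hj).2
      omega
    rw [this, Finset.card_range]

lemma phi_lt_iff {μ : YoungDiagram} {N : ℕ} {T : SemistandardYoungTableau μ}
    (hT : T ∈ ssytSet μ N) {i j : ℕ} (hij : (i, j) ∈ μ) (k : ℕ) :
    j < phi μ T k i ↔ T i j ≤ k := by
  constructor
  · intro h
    by_contra hc
    push_neg at hc
    have hsub : (Finset.range (μ.rowLen i)).filter (fun j' => T i j' ≤ k) ⊆ Finset.range j := by
      intro j' hj'
      simp only [Finset.mem_filter, Finset.mem_range] at hj' ⊢
      by_contra hge
      push_neg at hge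
      have hmem : (i, j') ∈ μ := YoungDiagram.mem_iff_lt_rowLen.mpr hj'.1
      have : T i j ≤ T i j' := T.row_weak_of_le hge hmem
      omega
    have := Finset.card_le_card hsub
    rw [Finset.card_range] at this
    rw [phi] at h
    omega
  · intro h
    have hsub : Finset.range (j+1) ⊆
        (Finset.range (μ.rowLen i)).filter (fun j' => T i j' ≤ k) := by
      intro j' hj'
      rw [Finset.mem_range] at hj'
      have hmem : (i, j') ∈ μ := μ.up_left_mem le_rfl (by omega) hij
      simp only [Finset.mem_filter, Finset.mem_range]
      refine ⟨YoungDiagram.mem_iff_lt_rowLen.mp hmem, ?_⟩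
      have : T i j' ≤ T i j := T.row_weak_of_le (by omega) hij
      omega
    have := Finset.card_le_card hsub
    rw [Finset.card_range] at this
    rw [phi]
    omega

lemma phi_injOn (μ : YoungDiagram) (N : ℕ) : Set.InjOn (phi μ) (ssytSet μ N) := by
  intro T hT T' hT' heq
  ext i j
  by_cases hij : (i, j) ∈ μ
  · have h1 : ∀ k, T i j ≤ k ↔ T' i j ≤ k := by
      intro k
      rw [← phi_lt_iff hT hij k, heq, phi_lt_iff hT' hij k]
    have := (h1 (T i j)).mp le_rfl
    have := (h1 (T' i j)).mpr le_rfl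
    omega
  · rw [T.zeros hij, T'.zeros hij]

lemma phi_surjOn (μ : YoungDiagram) (N : ℕ) :
    ∀ g ∈ GTset μ.rowLen N, ∃ T ∈ ssytSet μ N, phi μ T = g := by
  intro g hg
  replace hg : IsGT μ.rowLen N g := hg
  have hex : ∀ i j, (i, j) ∈ μ → ∃ k, j < g k i := fun i j h =>
    ⟨N, by rw [hg.2.2.2 N i le_rfl]; exact YoungDiagram.mem_iff_lt_rowLen.mp h⟩
  set T : SemistandardYoungTableau μ :=
    { entry := fun i j => if h : (i, j) ∈ μ then Nat.find (hex i j h) else 0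
      row_weak' := by
        intro i j1 j2 hj hcell
        have h1 : (i, j1) ∈ μ := μ.up_left_mem le_rfl (le_of_lt hj) hcell
        rw [dif_pos h1, dif_pos hcell]
        have hspec : j2 < g (Nat.find (hex i j2 hcell)) i := Nat.find_spec (hex i j2 hcell)
        exact Nat.find_min' (hex i j1 h1) (by omega)
      col_strict' := by
        intro i1 i2 j hi hcell
        have h1 : (i1, j) ∈ μ := μ.up_left_mem (le_of_lt hi) le_rfl hcell
        rw [dif_pos h1, dif_pos hcell]
        set k2 := Nat.find (hex i2 j hcell) with hk2def
        have hspec : j < g k2 i2 := Nat.find_spec (hex i2 j hcell)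
        have hk2 : i2 < k2 := by
          by_contra hc
          push_neg at hc
          have := hg.eq_zero hc
          omega
        set d := i2 - i1 with hd
        have hshift : g ((k2 - d) + d) (i1 + d) ≤ g (k2 - d) i1 := hg.shift d (k2 - d) i1
        have he1 : (k2 - d) + d = k2 := by omega
        have he2 : i1 + d = i2 := by omega
        rw [he1, he2] at hshift
        have : Nat.find (hex i1 j h1) ≤ k2 - d := Nat.find_min' (hex i1 j h1) (by omega)
        omega
      zeros' := by
        intro i j h
        rw [dif_neg h] }
  have hTmem : T ∈ ssytSet μ N := by
    intro i j hij
    show 1 ≤ T.entry i j ∧ T.entry i j ≤ N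
    simp only [T, dif_pos hij]
    constructor
    · by_contra hc
      push_neg at hc
      interval_cases h : Nat.find (hex i j hij)
      have := Nat.find_spec (hex i j hij)
      rw [h, hg.1 i] at this
      omega
    · exact Nat.find_min' (hex i j hij)
        (by rw [hg.2.2.2 N i le_rfl]; exact YoungDiagram.mem_iff_lt_rowLen.mp hij)
  refine ⟨T, hTmem, ?_⟩
  funext k i
  rw [phi]
  have hle : g k i ≤ μ.rowLen i := by
    have := hg.le_f k i
    omega
  have hset : (Finset.range (μ.rowLen i)).filter (fun j => T i j ≤ k) =
      Finset.range (g k i) := by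
    ext j
    simp only [Finset.mem_filter, Finset.mem_range]
    constructor
    · rintro ⟨hj, hTj⟩
      have hij : (i, j) ∈ μ := YoungDiagram.mem_iff_lt_rowLen.mpr hj
      have hTval : T i j = Nat.find (hex i j hij) := by
        show T.entry i j = _
        simp only [T, dif_pos hij]
      rw [hTval] at hTj
      have hspec : j < g (Nat.find (hex i j hij)) i := Nat.find_spec (hex i j hij)
      have := hg.mono hTj i
      omega
    · intro hj
      have hjr : j < μ.rowLen i := by omega
      have hij : (i, j) ∈ μ := YoungDiagram.mem_iff_lt_rowLen.mpr hjr
      have hTval : T i j = Nat.find (hex i j hij) := by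
        show T.entry i j = _
        simp only [T, dif_pos hij]
      refine ⟨hjr, ?_⟩
      rw [hTval]
      exact Nat.find_min' (hex i j hij) hj
  rw [hset, Finset.card_range]

lemma ssytCount_eq_gtset (μ : YoungDiagram) (N : ℕ) :
    ssytCount μ N = (GTset μ.rowLen N).ncard := by
  have hbij : Set.BijOn (phi μ) (ssytSet μ N) (GTset μ.rowLen N) := by
    refine ⟨fun T hT => phi_isGT hT, phi_injOn μ N, ?_⟩
    intro g hg
    obtain ⟨T, hT, hTg⟩ := phi_surjOn μ N g hg
    exact ⟨T, hT, hTg⟩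
  rw [ssytCount, ← hbij.image_eq, Set.ncard_image_of_injOn hbij.injOn]

/-! ### The complement involution on patterns -/

def cmap (m N : ℕ) (g : ℕ → ℕ → ℕ) : ℕ → ℕ → ℕ :=
  fun k i => if i < min k N then m - g (min k N) (min k N - 1 - i) else 0

lemma cmap_isGT {f f' : ℕ → ℕ} {N m : ℕ}
    (hanti : ∀ i1 i2, i1 ≤ i2 → f i2 ≤ f i1)
    (hff' : ∀ i, i < N → f' i = m - f (N - 1 - i))
    (hf'N : ∀ i, N ≤ i → f' i = 0)
    {g : ℕ → ℕ → ℕ} (hg : IsGT f N g) : IsGT f' N (cmap m N g) := by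
  refine ⟨?_, ?_, ?_, ?_⟩
  · intro i
    simp [cmap]
  · intro k i
    rcases le_or_gt N k with hk | hk
    · have h1 : min k N = N := by omega
      have h2 : min (k+1) N = N := by omega
      rw [cmap, cmap, h1, h2]
    · have h1 : min k N = k := by omega
      have h2 : min (k+1) N = k + 1 := by omega
      rw [cmap, cmap, h1, h2]
      by_cases hik : i < k
      · rw [if_pos hik, if_pos (by omega)]
        have he : (k + 1) - 1 - i = (k - 1 - i) + 1 := by omega
        have := hg.2.2.1 k (k - 1 - i)
        rw [← he] at this
        omega
      · rw [if_neg hik]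
        omega
  · intro k i
    rcases le_or_gt N k with hk | hk
    · have h1 : min k N = N := by omega
      have h2 : min (k+1) N = N := by omega
      rw [cmap, cmap, h1, h2]
      by_cases hik : i + 1 < N
      · rw [if_pos hik, if_pos (by omega)]
        have hfv1 : g N (N - 1 - (i+1)) = f (N - 1 - (i+1)) := hg.2.2.2 N _ le_rfl
        have hfv2 : g N (N - 1 - i) = f (N - 1 - i) := hg.2.2.2 N _ le_rfl
        have := hanti (N - 1 - (i+1)) (N - 1 - i) (by omega)
        omega
      · rw [if_neg hik]
        omega
    · have h1 : min k N = k := by omega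
      have h2 : min (k+1) N = k + 1 := by omega
      rw [cmap, cmap, h1, h2]
      by_cases hik : i + 1 < k + 1
      · rw [if_pos hik, if_pos (by omega)]
        have he : (k + 1) - 1 - (i + 1) = k - 1 - i := by omega
        rw [he]
        have := hg.2.1 k (k - 1 - i)
        omega
      · rw [if_neg hik]
        omega
  · intro k i hk
    have h1 : min k N = N := by omega
    rw [cmap, h1]
    by_cases hik : i < N
    · rw [if_pos hik, hg.2.2.2 N _ le_rfl, hff' i hik]
    · rw [if_neg hik, hf'N i (by omega)]

lemma cmap_cmap {f : ℕ → ℕ} {N m : ℕ}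
    (hfle : ∀ i, f i ≤ m) (hfN : ∀ i, N ≤ i → f i = 0)
    {g : ℕ → ℕ → ℕ} (hg : IsGT f N g) : cmap m N (cmap m N g) = g := by
  funext k i
  rw [cmap]
  set k' := min k N with hk'
  have hgk : g k i = g k' i := by
    rcases le_or_gt N k with h | h
    · have : k' = N := by omega
      rw [this, hg.2.2.2 k i (by omega), hg.2.2.2 N i le_rfl]
    · have : k' = k := by omega
      rw [this]
  by_cases hik : i < k'
  · rw [if_pos hik, cmap]
    have h2 : min k' N = k' := by omega
    rw [h2, if_pos (show k' - 1 - i < k' by omega)]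
    have he : k' - 1 - (k' - 1 - i) = i := by omega
    rw [he]
    have hlef : g k' i ≤ f i := hg.le_f k' i
    have := hfle i
    omega
  · rw [if_neg hik]
    rcases le_or_gt N k with h | h
    · have hkN : k' = N := by omega
      rw [hgk, hkN, hg.2.2.2 N i le_rfl, hfN i (by omega)]
    · have hkk : k' = k := by omega
      rw [hg.eq_zero (show k ≤ i by omega)]

lemma gtset_ncard_eq {f f' : ℕ → ℕ} (N m : ℕ)
    (hfle : ∀ i, f i ≤ m) (hf'le : ∀ i, f' i ≤ m)
    (hanti : ∀ i1 i2, i1 ≤ i2 → f i2 ≤ f i1)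
    (h'anti : ∀ i1 i2, i1 ≤ i2 → f' i2 ≤ f' i1)
    (hff' : ∀ i, i < N → f' i = m - f (N - 1 - i))
    (hf'f : ∀ i, i < N → f i = m - f' (N - 1 - i))
    (hfN : ∀ i, N ≤ i → f i = 0) (hf'N : ∀ i, N ≤ i → f' i = 0) :
    (GTset f N).ncard = (GTset f' N).ncard := by
  have hbij : Set.BijOn (cmap m N) (GTset f N) (GTset f' N) := by
    refine ⟨fun g hg => cmap_isGT hanti hff' hf'N hg, ?_, ?_⟩
    · intro g hg g' hg' heq
      have h1 : cmap m N (cmap m N g) = cmap m N (cmap m N g') := by rw [heq]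
      rwa [cmap_cmap hfle hfN hg, cmap_cmap hfle hfN hg'] at h1
    · intro h hh
      refine ⟨cmap m N h, cmap_isGT h'anti hf'f hfN hh, cmap_cmap hf'le hf'N hh⟩
  rw [← hbij.image_eq, Set.ncard_image_of_injOn hbij.injOn]

/-! ### Row lengths of the two shapes -/

lemma rowLen_eq_of_iff {μ : YoungDiagram} {i c : ℕ} (h : ∀ j, (i, j) ∈ μ ↔ j < c) :
    μ.rowLen i = c := by
  have h1 : ¬ (c < μ.rowLen i) := by
    rw [← YoungDiagram.mem_iff_lt_rowLen, h c]
    omega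
  rcases Nat.eq_zero_or_pos c with hc | hc
  · omega
  · have h2 : c - 1 < μ.rowLen i := by
      rw [← YoungDiagram.mem_iff_lt_rowLen, h (c-1)]
      omega
    omega

lemma mem_muShape {n i j : ℕ} : (i, j) ∈ muShape n ↔ j < n - i / 2 := by
  show (i, j) ∈ (muShape n).cells ↔ _
  simp only [muShape, Finset.mem_filter, Finset.mem_product, Finset.mem_range]
  omega

lemma mem_lambdaShape {n i j : ℕ} : (i, j) ∈ lambdaShape n ↔ j < n - (i + 1) / 2 := by
  show (i, j) ∈ (lambdaShape n).cells ↔ _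
  simp only [lambdaShape, Finset.mem_filter, Finset.mem_product, Finset.mem_range]
  omega

lemma rowLen_muShape (n i : ℕ) : (muShape n).rowLen i = n - i / 2 :=
  rowLen_eq_of_iff fun _ => mem_muShape

lemma rowLen_lambdaShape (n i : ℕ) : (lambdaShape n).rowLen i = n - (i + 1) / 2 :=
  rowLen_eq_of_iff fun _ => mem_lambdaShape

/-- The number of semistandard Young tableaux of shape `(n, n, n-1, n-1, …, 2, 2, 1, 1)`
with entries from `{1, …, 2n+1}` equals the number of semistandard Young tableaux of shape
`(n, n-1, n-1, …, 2, 2, 1, 1)` with entries from `{1, …, 2n+1}`. -/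
theorem ssyt_count_shape_eq (n : ℕ) (hn : 1 ≤ n) :
    ssytCount (muShape n) (2*n+1) = ssytCount (lambdaShape n) (2*n+1) := by
  rw [ssytCount_eq_gtset, ssytCount_eq_gtset]
  apply gtset_ncard_eq (f := (muShape n).rowLen) (f' := (lambdaShape n).rowLen) (2*n+1) n
  · intro i; rw [rowLen_muShape]; omega
  · intro i; rw [rowLen_lambdaShape]; omega
  · intro i1 i2 h; rw [rowLen_muShape, rowLen_muShape]; omega
  · intro i1 i2 h; rw [rowLen_lambdaShape, rowLen_lambdaShape]; omega
  · intro i hi; rw [rowLen_lambdaShape, rowLen_muShape]; omega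
  · intro i hi; rw [rowLen_muShape, rowLen_lambdaShape]; omega
  · intro i hi; rw [rowLen_muShape]; omega
  · intro i hi; rw [rowLen_lambdaShape]; omega
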